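/- The set S⁰ = {(s,t,u) ∈ ℝ³ : 0 < s < 1, 0 < u, u < t, t < 1 − u, (1−t)² − su > 0, t² − (1−s)u > 0, (1−2s)(1−2t+tu−su) = 0} is a connected subset of ℝ³. -/

import Mathlib

open Set

/-- The semialgebraic set S⁰, with coordinates (s, t, u) ∈ ℝ³. -/
def Szero : Set (ℝ × ℝ × ℝ) :=
  {p | 0 < p.1 ∧ p.1 < 1 ∧ 0 < p.2.2 ∧ p.2.2 < p.2.1 ∧ p.2.1 < 1 - p.2.2 ∧
    (1 - p.2.1) ^ 2 - p.1 * p.2.2 > 0 ∧ p.2.1 ^ 2 - (1 - p.1) * p.2.2 > 0 ∧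
    (1 - 2 * p.1) * (1 - 2 * p.2.1 + p.2.1 * p.2.2 - p.1 * p.2.2) = 0}

/- ### Auxiliary definitions -/

/-- Upper bound function for the slice `s = 1/2`. -/
noncomputable def mA (t : ℝ) : ℝ := min (min t (1 - t)) (min (2 * t ^ 2) (2 * (1 - t) ^ 2))

/-- Parametrization of the piece `s = 1/2`. -/
noncomputable def fA (q : ℝ × ℝ) : ℝ × ℝ × ℝ := (1 / 2, q.1, q.2 * mA q.1)

def DA : Set (ℝ × ℝ) := Ioo (0 : ℝ) 1 ×ˢ Ioo (0 : ℝ) 1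

noncomputable def LB (t : ℝ) : ℝ := max ((2 * t - 1) / t) ((1 - 2 * t) / (1 - t))

noncomputable def UB (t : ℝ) : ℝ := min t (1 - t)

noncomputable def uB (q : ℝ × ℝ) : ℝ := LB q.1 + q.2 * (UB q.1 - LB q.1)

/-- Parametrization of the piece `1 - 2t + tu - su = 0`. -/
noncomputable def fB (q : ℝ × ℝ) : ℝ × ℝ × ℝ :=
  ((1 - 2 * q.1 + q.1 * uB q) / uB q, q.1, uB q)

noncomputable def DB : Set (ℝ × ℝ) :=
  Ioo ((3 - Real.sqrt 5) / 2) ((Real.sqrt 5 - 1) / 2) ×ˢ Ioo (0 : ℝ) 1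

/- ### Basic square-root facts -/

lemma sqrt5_sq : Real.sqrt 5 ^ 2 = 5 := Real.sq_sqrt (by norm_num)

lemma sqrt5_gt : (2 : ℝ) < Real.sqrt 5 := by
  nlinarith [sqrt5_sq, Real.sqrt_nonneg 5]

lemma sqrt5_lt : Real.sqrt 5 < 3 := by
  nlinarith [sqrt5_sq, Real.sqrt_nonneg 5]

/- ### Facts about the slice s = 1/2 -/

lemma mA_pos {t : ℝ} (h0 : 0 < t) (h1 : t < 1) : 0 < mA t := by
  have : 0 < 1 - t := by linarith
  unfold mA
  positivity

/- ### Facts about the piece B -/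

lemma quad_of_mem {t : ℝ} (ht : t ∈ Ioo ((3 - Real.sqrt 5) / 2) ((Real.sqrt 5 - 1) / 2)) :
    0 < t ∧ t < 1 ∧ t ^ 2 - 3 * t + 1 < 0 ∧ t ^ 2 + t - 1 < 0 := by
  obtain ⟨ha, hb⟩ := ht
  have h5 := sqrt5_sq
  have h2 := sqrt5_gt
  have h3 := sqrt5_lt
  have h0t : 0 < t := by nlinarith
  have ht1 : t < 1 := by nlinarith
  refine ⟨h0t, ht1, ?_, ?_⟩
  · nlinarith [mul_pos (show (0:ℝ) < t - (3 - Real.sqrt 5) / 2 by linarith)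
      (show (0:ℝ) < (3 + Real.sqrt 5) / 2 - t by nlinarith)]
  · nlinarith [mul_pos (show (0:ℝ) < (Real.sqrt 5 - 1) / 2 - t by linarith)
      (show (0:ℝ) < t - (-1 - Real.sqrt 5) / 2 by nlinarith)]

lemma mem_of_quad {t : ℝ} (h0 : 0 < t) (h1 : t < 1)
    (hq1 : t ^ 2 - 3 * t + 1 < 0) (hq2 : t ^ 2 + t - 1 < 0) :
    t ∈ Ioo ((3 - Real.sqrt 5) / 2) ((Real.sqrt 5 - 1) / 2) := by
  have h5 := sqrt5_sq
  have h2 := sqrt5_gt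
  have h3 := sqrt5_lt
  constructor
  · by_contra h
    push_neg at h
    nlinarith [mul_nonneg (show (0:ℝ) ≤ (3 - Real.sqrt 5) / 2 - t by linarith)
      (show (0:ℝ) ≤ (3 + Real.sqrt 5) / 2 - t by nlinarith)]
  · by_contra h
    push_neg at h
    nlinarith [mul_nonneg (show (0:ℝ) ≤ t - (Real.sqrt 5 - 1) / 2 by linarith)
      (show (0:ℝ) ≤ t - (-1 - Real.sqrt 5) / 2 by nlinarith)]

lemma LB_nonneg {t : ℝ} (h0 : 0 < t) (h1 : t < 1) : 0 ≤ LB t := by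
  rcases le_or_gt t (1 / 2) with h | h
  · exact le_trans (div_nonneg (by linarith) (by linarith)) (le_max_right _ _)
  · exact le_trans (div_nonneg (by linarith) (by linarith)) (le_max_left _ _)

lemma LB_lt_UB {t : ℝ} (h0 : 0 < t) (h1 : t < 1)
    (hq1 : t ^ 2 - 3 * t + 1 < 0) (hq2 : t ^ 2 + t - 1 < 0) : LB t < UB t := by
  have h1' : 0 < 1 - t := by linarith
  refine max_lt (lt_min ?_ ?_) (lt_min ?_ ?_)
  · rw [div_lt_iff₀ h0]; nlinarith [sq_nonneg (t - 1)]
  · rw [div_lt_iff₀ h0]; nlinarith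
  · rw [div_lt_iff₀ h1']; nlinarith
  · rw [div_lt_iff₀ h1']; nlinarith [sq_nonneg t]

/-- For points of `DB`, the `u` coordinate lies strictly between `LB` and `UB`. -/
lemma uB_facts {q : ℝ × ℝ} (hq : q ∈ DB) :
    0 < q.1 ∧ q.1 < 1 ∧ LB q.1 < uB q ∧ uB q < UB q.1 ∧ 0 < uB q := by
  obtain ⟨ht, hr⟩ := hq
  obtain ⟨h0, h1, hq1, hq2⟩ := quad_of_mem ht
  have hLU := LB_lt_UB h0 h1 hq1 hq2
  have hL0 := LB_nonneg h0 h1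
  have hlt : LB q.1 < uB q := by
    have : 0 < q.2 * (UB q.1 - LB q.1) := mul_pos hr.1 (by linarith)
    unfold uB; linarith
  have hgt : uB q < UB q.1 := by
    have : q.2 * (UB q.1 - LB q.1) < 1 * (UB q.1 - LB q.1) :=
      mul_lt_mul_of_pos_right hr.2 (by linarith)
    unfold uB; linarith
  exact ⟨h0, h1, hlt, hgt, by linarith⟩

/- ### The pieces are inside Szero, and cover it -/

lemma A_sub : fA '' DA ⊆ Szero := by
  rintro p ⟨⟨t, r⟩, ⟨⟨h0t, h1t⟩, h0r, h1r⟩, rfl⟩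
  have hm : 0 < mA t := mA_pos h0t h1t
  set u := r * mA t with hu
  have hu0 : 0 < u := mul_pos h0r hm
  have hum : u < mA t := by
    calc u < 1 * mA t := mul_lt_mul_of_pos_right h1r hm
    _ = mA t := one_mul _
  have h1 : u < t := lt_of_lt_of_le hum (le_trans (min_le_left _ _) (min_le_left _ _))
  have h2 : u < 1 - t := lt_of_lt_of_le hum (le_trans (min_le_left _ _) (min_le_right _ _))
  have h3 : u < 2 * t ^ 2 := lt_of_lt_of_le hum (le_trans (min_le_right _ _) (min_le_left _ _))
  have h4 : u < 2 * (1 - t) ^ 2 :=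
    lt_of_lt_of_le hum (le_trans (min_le_right _ _) (min_le_right _ _))
  simp only [Szero, fA, mem_setOf_eq]
  refine ⟨by norm_num, by norm_num, hu0, h1, by linarith, ?_, ?_, ?_⟩
  · nlinarith
  · nlinarith
  · norm_num

lemma B_sub : fB '' DB ⊆ Szero := by
  rintro p ⟨⟨t, r⟩, hq, rfl⟩
  simp only [Szero, fB, mem_setOf_eq]
  obtain ⟨h0t, h1t, hL, hU, hu0⟩ := uB_facts hq
  set u := uB (t, r) with hudef
  have hut : u < t := lt_of_lt_of_le hU (min_le_left _ _)
  have hut' : u < 1 - t := lt_of_lt_of_le hU (min_le_right _ _)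
  have hnum_pos : 0 < 1 - 2 * t + t * u := by
    have : (2 * t - 1) / t < u := lt_of_le_of_lt (le_max_left _ _) hL
    rw [div_lt_iff₀ h0t] at this
    nlinarith
  have hnum_lt : 1 - 2 * t + t * u < u := by
    have : (1 - 2 * t) / (1 - t) < u := lt_of_le_of_lt (le_max_right _ _) hL
    rw [div_lt_iff₀ (by linarith : (0:ℝ) < 1 - t)] at this
    nlinarith
  have hune : u ≠ 0 := ne_of_gt hu0
  have hs : (1 - 2 * t + t * u) / u * u = 1 - 2 * t + t * u := div_mul_cancel₀ _ hune
  refine ⟨div_pos hnum_pos hu0, (div_lt_one hu0).mpr hnum_lt, hu0, hut, by linarith, ?_, ?_, ?_⟩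
  · rw [hs]; nlinarith
  · have h2 : (1 - (1 - 2 * t + t * u) / u) * u = u - (1 - 2 * t + t * u) := by
      field_simp
    rw [h2]; nlinarith
  · rw [hs]; ring_nf

lemma cover : Szero ⊆ fA '' DA ∪ fB '' DB := by
  rintro ⟨s, t, u⟩ ⟨hs0, hs1, hu0, hut, htu, hP, hQ, hE⟩
  simp only at hs0 hs1 hu0 hut htu hP hQ hE
  have h0t : 0 < t := lt_trans hu0 hut
  have h1t : t < 1 := by linarith
  rcases mul_eq_zero.mp hE with h | h
  · -- s = 1/2
    have hs : s = 1 / 2 := by linarith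
    subst hs
    left
    have hm : 0 < mA t := mA_pos h0t h1t
    have hum : u < mA t := by
      refine lt_min (lt_min hut (by linarith)) (lt_min ?_ ?_)
      · nlinarith
      · nlinarith
    refine ⟨(t, u / mA t), ⟨⟨h0t, h1t⟩, div_pos hu0 hm, (div_lt_one hm).mpr hum⟩, ?_⟩
    simp only [fA]
    rw [div_mul_cancel₀ _ (ne_of_gt hm)]
  · -- 1 - 2t + tu - su = 0
    right
    have hsu : s * u = 1 - 2 * t + t * u := by linarith
    have hnum_pos : 0 < 1 - 2 * t + t * u := by rw [← hsu]; positivity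
    have hnum_lt : 1 - 2 * t + t * u < u := by
      rw [← hsu]; nlinarith
    have hL : LB t < u := by
      refine max_lt ?_ ?_
      · rw [div_lt_iff₀ h0t]; nlinarith
      · rw [div_lt_iff₀ (by linarith : (0:ℝ) < 1 - t)]; nlinarith
    have hU : u < UB t := lt_min hut (by linarith)
    have hq1 : t ^ 2 - 3 * t + 1 < 0 := by nlinarith
    have hq2 : t ^ 2 + t - 1 < 0 := by nlinarith
    have htI := mem_of_quad h0t h1t hq1 hq2
    have hLU : LB t < UB t := lt_trans hL hU
    have hd : UB t - LB t ≠ 0 := ne_of_gt (by linarith)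
    refine ⟨(t, (u - LB t) / (UB t - LB t)), ⟨htI, div_pos (by linarith) (by linarith),
      (div_lt_one (by linarith)).mpr (by linarith)⟩, ?_⟩
    have huB : uB (t, (u - LB t) / (UB t - LB t)) = u := by
      unfold uB
      simp only
      rw [div_mul_cancel₀ _ hd]
      ring
    simp only [fB, huB]
    have : (1 - 2 * t + t * u) / u = s := by
      rw [← hsu, mul_div_assoc, div_self (ne_of_gt hu0), mul_one]
    rw [this]

/- ### Connectedness of the pieces -/

lemma connA : IsConnected (fA '' DA) := by
  have hc : IsConnected DA :=
    ((convex_Ioo (0:ℝ) 1).prod (convex_Ioo (0:ℝ) 1)).isConnected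
      ⟨(1/2, 1/2), ⟨by norm_num, by norm_num⟩, by norm_num, by norm_num⟩
  refine hc.image fA ?_
  apply Continuous.continuousOn
  unfold fA mA
  fun_prop

lemma connB : IsConnected (fB '' DB) := by
  have hne : ((1:ℝ)/2, (1:ℝ)/2) ∈ DB := by
    constructor
    · constructor
      · simp only; nlinarith [sqrt5_gt]
      · simp only; nlinarith [sqrt5_gt]
    · constructor <;> norm_num
  have hc : IsConnected DB :=
    ((convex_Ioo _ _).prod (convex_Ioo (0:ℝ) 1)).isConnected ⟨_, hne⟩
  refine hc.image fB ?_
  have hcu : ContinuousOn uB DB := by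
    apply ContinuousOn.add
    · apply ContinuousOn.sup
      · apply ContinuousOn.div
        · fun_prop
        · fun_prop
        · intro q hq
          exact ne_of_gt (uB_facts hq).1
      · apply ContinuousOn.div
        · fun_prop
        · fun_prop
        · intro q hq
          have := (uB_facts hq).2.1
          intro h; linarith [h]
    · apply ContinuousOn.mul
      · fun_prop
      · apply ContinuousOn.sub
        · exact (continuous_min.comp (continuous_fst.prodMk
            (continuous_const.sub continuous_fst))).continuousOn
        · apply ContinuousOn.sup
          · apply ContinuousOn.div
            · fun_prop
            · fun_prop
            · intro q hq; exact ne_of_gt (uB_facts hq).1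
          · apply ContinuousOn.div
            · fun_prop
            · fun_prop
            · intro q hq
              have := (uB_facts hq).2.1
              intro h; linarith [h]
  have hune : ∀ q ∈ DB, uB q ≠ 0 := fun q hq => ne_of_gt (uB_facts hq).2.2.2.2
  unfold fB
  apply ContinuousOn.prodMk
  · apply ContinuousOn.div
    · apply ContinuousOn.add
      · fun_prop
      · exact (continuous_fst.continuousOn).mul hcu
    · exact hcu
    · exact hune
  · exact (continuous_fst.continuousOn).prodMk hcu

/- ### The common point -/

lemma common : ((fA '' DA) ∩ (fB '' DB)).Nonempty := by
  refine ⟨(1/2, 1/2, 1/4), ⟨(1/2, 1/2), ⟨⟨by norm_num, by norm_num⟩, by norm_num, by norm_num⟩, ?_⟩,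
    ⟨(1/2, 1/2), ?_, ?_⟩⟩
  · unfold fA mA; norm_num
  · constructor
    · constructor
      · simp only; nlinarith [sqrt5_gt]
      · simp only; nlinarith [sqrt5_gt]
    · constructor <;> norm_num
  · unfold fB uB LB UB; norm_num

/-- The set S⁰ is a connected subset of ℝ³. -/
theorem Szero_connected : IsConnected Szero := by
  have heq : Szero = fA '' DA ∪ fB '' DB :=
    le_antisymm cover (union_subset A_sub B_sub)
  rw [heq]
  exact IsConnected.union common connA connB
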